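/- In a delta-matroid D, every feasible set X is sandwiched between a minimum-cardinality feasible set and a maximum-cardinality feasible set: there exist A ∈ F_min(D) and B ∈ F_max(D) with A ⊆ X ⊆ B. -/
import Mathlib


open Finset Polynomial

variable {α : Type*} [DecidableEq α]

/-- The twist of a collection of feasible sets with respect to `A`. -/
noncomputable def SS.twist (A : Finset α) (F : Finset (Finset α)) : Finset (Finset α) :=
  F.image (fun X => symmDiff A X)

/-- Loop complementation at a single element `e`. -/
noncomputable def SS.lc (e : α) (F : Finset (Finset α)) : Finset (Finset α) :=
  symmDiff F ((F.filter (fun X => e ∉ X)).image (insert e))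

/-- The two generating operations: twist `*` and loop complementation `×`. -/
inductive SS.Op | star | cross

/-- Apply a single operation at a single element. -/
noncomputable def SS.opElem : SS.Op → α → Finset (Finset α) → Finset (Finset α)
  | .star, e, F => SS.twist {e} F
  | .cross, e, F => SS.lc e F

/-- Apply a word in `{*, ×}` at a single element. -/
noncomputable def SS.wordElem (w : List SS.Op) (e : α) (F : Finset (Finset α)) : Finset (Finset α) :=
  w.foldl (fun F o => SS.opElem o e F) F

/-- Apply a word in `{*, ×}` elementwise on a subset `A`. -/
noncomputable def SS.wordOn (w : List SS.Op) (A : Finset α) (F : Finset (Finset α)) : Finset (Finset α) :=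
  A.toList.foldl (fun F e => SS.wordElem w e F) F

/-- Size of a largest feasible set. -/
noncomputable def SS.rmax (F : Finset (Finset α)) : ℕ := F.sup Finset.card

/-- Size of a smallest feasible set. -/
noncomputable def SS.rmin (F : Finset (Finset α)) : ℕ := sInf (Finset.card '' (F : Set (Finset α)))

/-- The width of a set system. -/
noncomputable def SS.width (F : Finset (Finset α)) : ℕ := SS.rmax F - SS.rmin F

/-- The minimum-cardinality feasible sets. -/
noncomputable def SS.Fmin (F : Finset (Finset α)) : Finset (Finset α) :=
  F.filter (fun X => X.card = SS.rmin F)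

/-- The maximum-cardinality feasible sets. -/
noncomputable def SS.Fmax (F : Finset (Finset α)) : Finset (Finset α) :=
  F.filter (fun X => X.card = SS.rmax F)

/-- The partial-`w` polynomial of a set system with ground set `E`. -/
noncomputable def SS.poly (w : List SS.Op) (E : Finset α) (F : Finset (Finset α)) :
    Polynomial ℤ :=
  ∑ A ∈ E.powerset, (Polynomial.X : Polynomial ℤ) ^ SS.width (SS.wordOn w A F)

/-- A proper set system satisfying the symmetric exchange axiom. -/
noncomputable def SS.IsDeltaMatroid (F : Finset (Finset α)) : Prop :=
  F.Nonempty ∧ ∀ X ∈ F, ∀ Y ∈ F, ∀ u ∈ symmDiff X Y,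
    ∃ v ∈ symmDiff X Y, symmDiff X {u, v} ∈ F

/-- Apply a sequence of single-element twists and loop complementations. -/
noncomputable def SS.seqApply : List (SS.Op × α) → Finset (Finset α) → Finset (Finset α)
  | [], F => F
  | (o, e) :: s, F => SS.seqApply s (SS.opElem o e F)

/-- A set system is vf-safe if every sequence of single-element twists and loop
complementations yields a delta-matroid. -/
noncomputable def SS.VfSafe (F : Finset (Finset α)) : Prop :=
  ∀ s : List (SS.Op × α), SS.IsDeltaMatroid (SS.seqApply s F)

/-- The direct sum of two set systems. -/
noncomputable def SS.dsum (F F' : Finset (Finset α)) : Finset (Finset α) :=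
  (F ×ˢ F').image (fun p => p.1 ∪ p.2)


lemma aux_min (F : Finset (Finset α)) (hne : F.Nonempty)
    (hex : ∀ X ∈ F, ∀ Y ∈ F, ∀ u ∈ symmDiff X Y,
      ∃ v ∈ symmDiff X Y, symmDiff X {u, v} ∈ F)
    (rmin : ℕ) (hrdef : rmin = sInf (Finset.card '' (F : Set (Finset α))))
    (X : Finset α) (hX : X ∈ F) :
    ∃ A ∈ F, A.card = rmin ∧ A ⊆ X := by
  have hrle : ∀ W ∈ F, rmin ≤ W.card := fun W hW => by
    rw [hrdef]; exact Nat.sInf_le ⟨W, by simpa using hW, rfl⟩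
  have hSne : (F.filter (fun Y => Y.card = rmin)).Nonempty := by
    have hmem : rmin ∈ Finset.card '' (F : Set (Finset α)) := by
      rw [hrdef]
      exact Nat.sInf_mem (by obtain ⟨W, hW⟩ := hne; exact ⟨W.card, ⟨W, by simpa using hW, rfl⟩⟩)
    obtain ⟨Y, hY, h⟩ := hmem
    exact ⟨Y, Finset.mem_filter.2 ⟨by simpa using hY, h⟩⟩
  obtain ⟨A, hA, hAmin⟩ := Finset.exists_min_image _ (fun Y => (Y \ X).card) hSne
  obtain ⟨hAF, hAcard⟩ := Finset.mem_filter.1 hA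
  refine ⟨A, hAF, hAcard, ?_⟩
  by_contra hsub
  obtain ⟨u, huA, huX⟩ : ∃ u, u ∈ A ∧ u ∉ X := by
    by_contra h; push_neg at h; exact hsub (fun a ha => h a ha)
  have huS : u ∈ symmDiff A X := Finset.mem_symmDiff.2 (Or.inl ⟨huA, huX⟩)
  obtain ⟨v, hvS, hZ⟩ := hex A hAF X hX u huS
  set Z := symmDiff A {u, v} with hZdef
  rcases Finset.mem_symmDiff.1 hvS with ⟨hvA, hvX⟩ | ⟨hvX, hvA⟩
  · -- v ∈ A: Z ⊆ A.erase u gives a smaller feasible set, contradiction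
    have hZsub : Z ⊆ A.erase u := by
      intro a ha
      rcases Finset.mem_symmDiff.1 ha with ⟨h1, h2⟩ | ⟨h1, h2⟩
      · simp only [Finset.mem_insert, Finset.mem_singleton, not_or] at h2
        exact Finset.mem_erase.2 ⟨h2.1, h1⟩
      · simp only [Finset.mem_insert, Finset.mem_singleton] at h1
        rcases h1 with rfl | rfl
        · exact absurd huA h2
        · exact absurd hvA h2
    have h1 : Z.card ≤ A.card - 1 := by
      calc Z.card ≤ (A.erase u).card := Finset.card_le_card hZsub
        _ = A.card - 1 := Finset.card_erase_of_mem huA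
    have h2 : rmin ≤ Z.card := hrle Z hZ
    have h3 : 0 < A.card := Finset.card_pos.2 ⟨u, huA⟩
    omega
  · -- v ∈ X \ A: exchange to get closer min set, contradiction with minimality
    have hvu : v ≠ u := fun h => (h ▸ hvA) huA
    have hsub1 : Z ⊆ insert v (A.erase u) := by
      intro a ha
      rcases Finset.mem_symmDiff.1 ha with ⟨h1, h2⟩ | ⟨h1, h2⟩
      · simp only [Finset.mem_insert, Finset.mem_singleton, not_or] at h2
        exact Finset.mem_insert.2 (Or.inr (Finset.mem_erase.2 ⟨h2.1, h1⟩))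
      · simp only [Finset.mem_insert, Finset.mem_singleton] at h1
        rcases h1 with rfl | rfl
        · exact absurd huA h2
        · exact Finset.mem_insert_self _ _
    have hcard1 : Z.card ≤ rmin := by
      calc Z.card ≤ (insert v (A.erase u)).card := Finset.card_le_card hsub1
        _ ≤ (A.erase u).card + 1 := Finset.card_insert_le _ _
        _ = A.card - 1 + 1 := by rw [Finset.card_erase_of_mem huA]
        _ = A.card := Nat.succ_pred_eq_of_pos (Finset.card_pos.2 ⟨u, huA⟩)
        _ = rmin := hAcard
    have hZcard : Z.card = rmin := le_antisymm hcard1 (hrle Z hZ)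
    have hZmem : Z ∈ F.filter (fun Y => Y.card = rmin) := Finset.mem_filter.2 ⟨hZ, hZcard⟩
    have hsub2 : Z \ X ⊆ (A \ X).erase u := by
      intro a ha
      obtain ⟨haZ, haX⟩ := Finset.mem_sdiff.1 ha
      rcases Finset.mem_symmDiff.1 haZ with ⟨h1, h2⟩ | ⟨h1, h2⟩
      · simp only [Finset.mem_insert, Finset.mem_singleton, not_or] at h2
        exact Finset.mem_erase.2 ⟨h2.1, Finset.mem_sdiff.2 ⟨h1, haX⟩⟩
      · simp only [Finset.mem_insert, Finset.mem_singleton] at h1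
        rcases h1 with rfl | rfl
        · exact absurd huA h2
        · exact absurd hvX haX
    have hlt : (Z \ X).card < (A \ X).card := by
      have h1 : (Z \ X).card ≤ (A \ X).card - 1 := by
        calc (Z \ X).card ≤ ((A \ X).erase u).card := Finset.card_le_card hsub2
          _ = (A \ X).card - 1 := Finset.card_erase_of_mem (Finset.mem_sdiff.2 ⟨huA, huX⟩)
      have h2 : 0 < (A \ X).card := Finset.card_pos.2 ⟨u, Finset.mem_sdiff.2 ⟨huA, huX⟩⟩
      omega
    exact absurd (hAmin Z hZmem) (not_le.2 hlt)


lemma aux_max (F : Finset (Finset α)) (hne : F.Nonempty)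
    (hex : ∀ X ∈ F, ∀ Y ∈ F, ∀ u ∈ symmDiff X Y,
      ∃ v ∈ symmDiff X Y, symmDiff X {u, v} ∈ F)
    (rmax : ℕ) (hrdef : rmax = F.sup Finset.card)
    (X : Finset α) (hX : X ∈ F) :
    ∃ B ∈ F, B.card = rmax ∧ X ⊆ B := by
  have hrle : ∀ W ∈ F, W.card ≤ rmax := fun W hW => hrdef ▸ Finset.le_sup hW
  have hSne : (F.filter (fun Y => Y.card = rmax)).Nonempty := by
    obtain ⟨B, hB, hBeq⟩ := Finset.exists_mem_eq_sup F hne Finset.card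
    exact ⟨B, Finset.mem_filter.2 ⟨hB, by rw [hrdef, hBeq]⟩⟩
  obtain ⟨B, hB, hBmin⟩ := Finset.exists_min_image _ (fun Y => (X \ Y).card) hSne
  obtain ⟨hBF, hBcard⟩ := Finset.mem_filter.1 hB
  refine ⟨B, hBF, hBcard, ?_⟩
  by_contra hsub
  obtain ⟨u, huX, huB⟩ : ∃ u, u ∈ X ∧ u ∉ B := by
    by_contra h; push_neg at h; exact hsub (fun a ha => h a ha)
  have huS : u ∈ symmDiff B X := Finset.mem_symmDiff.2 (Or.inr ⟨huX, huB⟩)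
  obtain ⟨v, hvS, hZ⟩ := hex B hBF X hX u huS
  set Z := symmDiff B {u, v} with hZdef
  rcases Finset.mem_symmDiff.1 hvS with ⟨hvB, hvX⟩ | ⟨hvX, hvB⟩
  · -- v ∈ B \ X : exchange keeps max size, gets closer to containing X
    have hvu : v ≠ u := fun h => huB (h ▸ hvB)
    have hsub1 : Z ⊆ insert u (B.erase v) := by
      intro a ha
      rcases Finset.mem_symmDiff.1 ha with ⟨h1, h2⟩ | ⟨h1, h2⟩
      · simp only [Finset.mem_insert, Finset.mem_singleton, not_or] at h2
        exact Finset.mem_insert.2 (Or.inr (Finset.mem_erase.2 ⟨h2.2, h1⟩))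
      · simp only [Finset.mem_insert, Finset.mem_singleton] at h1
        rcases h1 with rfl | rfl
        · exact Finset.mem_insert_self _ _
        · exact absurd hvB h2
    have hsub2 : insert u (B.erase v) ⊆ Z := by
      intro a ha
      rcases Finset.mem_insert.1 ha with rfl | ha
      · exact Finset.mem_symmDiff.2 (Or.inr ⟨Finset.mem_insert_self _ _, huB⟩)
      · obtain ⟨hav, haB⟩ := Finset.mem_erase.1 ha
        have hau : a ≠ u := fun h => huB (h ▸ haB)
        exact Finset.mem_symmDiff.2 (Or.inl ⟨haB, by simp [hau, hav]⟩)
    have hZcard : Z.card = rmax := by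
      have : Z = insert u (B.erase v) := Finset.Subset.antisymm hsub1 hsub2
      rw [this, Finset.card_insert_of_notMem (fun h => huB (Finset.mem_erase.1 h).2),
        Finset.card_erase_of_mem hvB]
      have : 0 < B.card := Finset.card_pos.2 ⟨v, hvB⟩
      omega
    have hZmem : Z ∈ F.filter (fun Y => Y.card = rmax) := Finset.mem_filter.2 ⟨hZ, hZcard⟩
    have hsub3 : X \ Z ⊆ (X \ B).erase u := by
      intro a ha
      obtain ⟨haX, haZ⟩ := Finset.mem_sdiff.1 ha
      have hau : a ≠ u := by
        rintro rfl
        exact haZ (Finset.mem_symmDiff.2 (Or.inr ⟨Finset.mem_insert_self _ _, huB⟩))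
      have hav : a ≠ v := by rintro rfl; exact hvX haX
      have haB : a ∉ B := fun h =>
        haZ (Finset.mem_symmDiff.2 (Or.inl ⟨h, by simp [hau, hav]⟩))
      exact Finset.mem_erase.2 ⟨hau, Finset.mem_sdiff.2 ⟨haX, haB⟩⟩
    have hlt : (X \ Z).card < (X \ B).card := by
      have h1 : (X \ Z).card ≤ (X \ B).card - 1 := by
        calc (X \ Z).card ≤ ((X \ B).erase u).card := Finset.card_le_card hsub3
          _ = (X \ B).card - 1 := Finset.card_erase_of_mem (Finset.mem_sdiff.2 ⟨huX, huB⟩)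
      have h2 : 0 < (X \ B).card := Finset.card_pos.2 ⟨u, Finset.mem_sdiff.2 ⟨huX, huB⟩⟩
      omega
    exact absurd (hBmin Z hZmem) (not_le.2 hlt)
  · -- v ∉ B : Z strictly larger than B, contradiction with maximality
    have hsub1 : insert u B ⊆ Z := by
      intro a ha
      rcases Finset.mem_insert.1 ha with rfl | haB
      · exact Finset.mem_symmDiff.2 (Or.inr ⟨Finset.mem_insert_self _ _, huB⟩)
      · have hau : a ≠ u := fun h => huB (h ▸ haB)
        have hav : a ≠ v := fun h => hvB (h ▸ haB)
        exact Finset.mem_symmDiff.2 (Or.inl ⟨haB, by simp [hau, hav]⟩)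
    have h1 : B.card + 1 ≤ Z.card := by
      calc B.card + 1 = (insert u B).card := (Finset.card_insert_of_notMem huB).symm
        _ ≤ Z.card := Finset.card_le_card hsub1
    have h2 : Z.card ≤ rmax := hrle Z hZ
    omega


open SS

theorem stmt11 (F : Finset (Finset α)) (hD : SS.IsDeltaMatroid F)
    (X : Finset α) (hX : X ∈ F) :
    ∃ A ∈ SS.Fmin F, ∃ B ∈ SS.Fmax F, A ⊆ X ∧ X ⊆ B := by
  obtain ⟨hne, hex⟩ := hD
  obtain ⟨A, hAF, hAcard, hAX⟩ := aux_min F hne hex (SS.rmin F) rfl X hX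
  obtain ⟨B, hBF, hBcard, hXB⟩ := aux_max F hne hex (SS.rmax F) rfl X hX
  exact ⟨A, Finset.mem_filter.2 ⟨hAF, hAcard⟩, B, Finset.mem_filter.2 ⟨hBF, hBcard⟩, hAX, hXB⟩
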